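/- Let M be a field of characteristic ≠ 2, 3 and let a, b ∈ M with a*(4a+27) ≠ 0, b ≠ 0 and 4*a*b + 27*a + 27*b = 0. Then the splitting fields over M of X^3 + a*X + a and of X^3 + b*X + b coincide; in particular X^3 + a*X + a and X^3 - (27a/(4a+27))*X - (27a/(4a+27)) have the same splitting field over M. -/

import Mathlib

open Polynomial

lemma cubic_ne_zero {F : Type*} [Field F] (c : F) : (X ^ 3 + C c * X + C c : F[X]) ≠ 0 := by
  intro h
  have := congrArg (fun p => Polynomial.coeff p 3) h
  simp [coeff_X, coeff_C] at this

lemma key {M : Type*} [Field M] (h27 : (27 : M) ≠ 0)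
    (a b : M) (ha : a * (4 * a + 27) ≠ 0)
    (hab : 4 * a * b + 27 * a + 27 * b = 0) :
    IntermediateField.adjoin M
        ((X ^ 3 + C a * X + C a : M[X]).rootSet (AlgebraicClosure M)) ≤
      IntermediateField.adjoin M
        ((X ^ 3 + C b * X + C b : M[X]).rootSet (AlgebraicClosure M)) := by
  rw [IntermediateField.adjoin_le_iff]
  intro r hr
  set K := IntermediateField.adjoin M
      ((X ^ 3 + C b * X + C b : M[X]).rootSet (AlgebraicClosure M)) with hK
  rw [Polynomial.mem_rootSet] at hr
  obtain ⟨-, hr⟩ := hr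
  set A := algebraMap M (AlgebraicClosure M) with hA
  have hinj : Function.Injective A := (algebraMap M (AlgebraicClosure M)).injective
  have hrr : r ^ 3 + A a * r + A a = 0 := by
    simpa [map_add, map_mul, map_pow] using hr
  set α := A a with hα
  set β := A b with hβ
  have hαne : α * (4 * α + 27) ≠ 0 := by
    have hmap : A (a * (4 * a + 27)) = α * (4 * α + 27) := by
      simp [map_mul, map_add, map_ofNat, hα]
    intro h
    exact ha (hinj (show A _ = A 0 by rw [map_zero, hmap, h]))
  have hαβ : 4 * α * β + 27 * α + 27 * β = 0 := by
    have := congrArg A hab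
    simpa [map_add, map_mul, map_ofNat] using this
  have h27' : (27 : AlgebraicClosure M) ≠ 0 := by
    intro h
    apply h27
    apply hinj
    simpa [map_ofNat] using h
  have h9 : (9 : AlgebraicClosure M) ≠ 0 := by
    intro h; apply h27'; linear_combination 3 * h
  have h4α : 4 * α + 27 ≠ 0 := fun h => hαne (by rw [h]; ring)
  have h2r3 : 2 * r + 3 ≠ 0 := by
    intro h
    apply h4α
    linear_combination (-8 : AlgebraicClosure M) * hrr + (4 * r ^ 2 - 6 * r + (4 * α + 9)) * h
  set s := -3 * r / (2 * r + 3) with hs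
  have hskey : ((-3 * r) ^ 3 + β * (-3 * r) * (2 * r + 3) ^ 2 + β * (2 * r + 3) ^ 3) * (4 * α + 27) = 0 := by
    linear_combination (-729 : AlgebraicClosure M) * hrr + ((-3 * r) * (2 * r + 3) ^ 2 + (2 * r + 3) ^ 3) * hαβ
  have hsroot : s ^ 3 + β * s + β = 0 := by
    have h0 : (-3 * r) ^ 3 + β * (-3 * r) * (2 * r + 3) ^ 2 + β * (2 * r + 3) ^ 3 = 0 :=
      (mul_eq_zero.mp hskey).resolve_right h4α
    rw [hs]
    field_simp [show r * 2 + 3 ≠ 0 by rw [mul_comm]; exact h2r3]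
    linear_combination h0
  have h2s3 : 2 * s + 3 ≠ 0 := by
    have : 2 * s + 3 = 9 / (2 * r + 3) := by
      rw [hs]; field_simp [show r * 2 + 3 ≠ 0 by rw [mul_comm]; exact h2r3]; ring
    rw [this]
    exact div_ne_zero h9 h2r3
  have hrs : r = -3 * s / (2 * s + 3) := by
    rw [eq_div_iff h2s3, hs]
    field_simp [show r * 2 + 3 ≠ 0 by rw [mul_comm]; exact h2r3]
    ring
  have hsK : s ∈ K := by
    apply IntermediateField.subset_adjoin
    rw [Polynomial.mem_rootSet]
    refine ⟨cubic_ne_zero b, ?_⟩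
    simpa [map_add, map_mul, map_pow] using hsroot
  have h3K : (3 : AlgebraicClosure M) ∈ K := by
    exact_mod_cast IntermediateField.natCast_mem K 3
  have h2K : (2 : AlgebraicClosure M) ∈ K := by
    exact_mod_cast IntermediateField.natCast_mem K 2
  rw [hrs]
  exact div_mem (mul_mem (neg_mem h3K) hsK) (add_mem (mul_mem h2K hsK) h3K)

theorem stmt5 {M : Type*} [Field M] (h2 : ringChar M ≠ 2) (h3 : ringChar M ≠ 3)
    (a b : M) (ha : a * (4 * a + 27) ≠ 0) (hb : b ≠ 0)
    (hab : 4 * a * b + 27 * a + 27 * b = 0) :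
    IntermediateField.adjoin M
        ((X ^ 3 + C a * X + C a : M[X]).rootSet (AlgebraicClosure M)) =
      IntermediateField.adjoin M
        ((X ^ 3 + C b * X + C b : M[X]).rootSet (AlgebraicClosure M)) := by
  have h3ne : (3 : M) ≠ 0 := by
    intro h
    have hd := (ringChar.spec M 3).mp (by exact_mod_cast h)
    rcases (Nat.prime_three.eq_one_or_self_of_dvd _ hd) with h1 | h1
    · exact CharP.ringChar_ne_one h1
    · exact h3 h1
  have h27 : (27 : M) ≠ 0 := by
    intro h; apply pow_ne_zero 3 h3ne; rw [← h]; norm_num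
  have h4b : 4 * b + 27 ≠ 0 := by
    intro h
    apply mul_ne_zero h27 h27
    linear_combination (4 * a + 27) * h - 4 * hab
  have hbne : b * (4 * b + 27) ≠ 0 := mul_ne_zero hb h4b
  have hba : 4 * b * a + 27 * b + 27 * a = 0 := by linear_combination hab
  exact le_antisymm (key h27 a b ha hab) (key h27 b a hbne hba)
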